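/- Uniqueness of the projection: let (I_t) be a stochastic indicator such that I_0 is super-additive and I_0(Y) ≤ 0 implies Y = 0 for all F_T-measurable Y ≥ 0. If Z_t and I_t(X) are F_t-measurable and both satisfy the projection equality I_0(X·1_{F}) = I_0(Z·1_{F}) for all F ∈ F_t, then Z_t = I_t(X) a.s. -/
import Mathlib


open MeasureTheory Filter Set
open scoped ENNReal Classical

noncomputable section

variable {Ω : Type*}

/-- `S` is the conditional essential supremum of the family `Γ` of extended-real-valued
random variables, given the sub-σ-algebra `m`: `S` is `m`-measurable, a.e. dominates every
member of `Γ`, and is minimal among `m`-measurable a.e. dominants. -/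
def IsCondSup {F : MeasurableSpace Ω} (μ : Measure Ω) (m : MeasurableSpace Ω)
    (Γ : Set (Ω → EReal)) (S : Ω → EReal) : Prop :=
  Measurable[m] S ∧ (∀ Y ∈ Γ, ∀ᵐ ω ∂μ, Y ω ≤ S ω) ∧
    ∀ T : Ω → EReal, Measurable[m] T → (∀ Y ∈ Γ, ∀ᵐ ω ∂μ, Y ω ≤ T ω) →
      ∀ᵐ ω ∂μ, S ω ≤ T ω

/-- `S` is the conditional essential infimum of the family `Γ` given `m`. -/
def IsCondInf {F : MeasurableSpace Ω} (μ : Measure Ω) (m : MeasurableSpace Ω)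
    (Γ : Set (Ω → EReal)) (S : Ω → EReal) : Prop :=
  Measurable[m] S ∧ (∀ Y ∈ Γ, ∀ᵐ ω ∂μ, S ω ≤ Y ω) ∧
    ∀ T : Ω → EReal, Measurable[m] T → (∀ Y ∈ Γ, ∀ᵐ ω ∂μ, T ω ≤ Y ω) →
      ∀ᵐ ω ∂μ, T ω ≤ S ω


theorem proj_aux
    {F : MeasurableSpace Ω} (μ : Measure Ω)
    (F0 Ft : MeasurableSpace Ω) (htF : Ft ≤ F)
    (I0 : (Ω → ℝ) → Ω → EReal)
    (hbdd : ∀ X : Ω → ℝ, ∃ einf esup : Ω → EReal,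
      IsCondInf μ F0 {fun ω => (X ω : EReal)} einf ∧
        IsCondSup μ F0 {fun ω => (X ω : EReal)} esup ∧
        ∀ᵐ ω ∂μ, einf ω ≤ I0 X ω ∧ I0 X ω ≤ esup ω)
    (hsuper : ∀ X Y : Ω → ℝ, ∀ᵐ ω ∂μ, I0 X ω + I0 Y ω ≤ I0 (X + Y) ω)
    (hposdef : ∀ Y : Ω → ℝ, Measurable Y → (∀ᵐ ω ∂μ, 0 ≤ Y ω) →
      ((∀ᵐ ω ∂μ, I0 Y ω ≤ 0) ↔ Y =ᵐ[μ] 0))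
    (Z : Ω → ℝ) (hZ : Measurable[Ft] Z)
    (W : Ω → ℝ) (hW : Measurable[Ft] W)
    (hZW : ∀ A : Set Ω, MeasurableSet[Ft] A →
      I0 (A.indicator Z) =ᵐ[μ] I0 (A.indicator W)) :
    ∀ᵐ ω ∂μ, Z ω ≤ W ω := by
  set A : ℕ → Set Ω := fun n => {ω | W ω < Z ω ∧ |W ω| ≤ n ∧ |Z ω| ≤ n} with hA
  have hAmeas : ∀ n, MeasurableSet[Ft] (A n) := by
    intro n
    exact (measurableSet_lt hW hZ).inter
      ((hW.abs measurableSet_Iic).inter (hZ.abs measurableSet_Iic))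
  have key : ∀ n, ∀ᵐ ω ∂μ, ω ∉ A n := by
    intro n
    obtain ⟨einf, esup, ⟨_, _, hinfmin⟩, ⟨_, _, hsupmin⟩, hbd⟩ := hbdd ((A n).indicator W)
    -- the indicator of W is bounded, hence I0 of it is finite a.e.
    have hsupn : ∀ᵐ ω ∂μ, esup ω ≤ (n : EReal) := by
      refine hsupmin (fun _ => ((n : ℝ) : EReal)) measurable_const ?_
      rintro Y rfl
      filter_upwards with ω
      by_cases hω : ω ∈ A n
      · simp only [indicator_of_mem hω]
        exact EReal.coe_le_coe_iff.2 (le_trans (le_abs_self _) hω.2.1)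
      · simp only [indicator_of_notMem hω, EReal.coe_zero]
        exact EReal.coe_le_coe_iff.2 (Nat.cast_nonneg n)
    have hinfn : ∀ᵐ ω ∂μ, ((-(n : ℝ) : ℝ) : EReal) ≤ einf ω := by
      refine hinfmin (fun _ => (((-(n : ℝ) : ℝ)) : EReal)) measurable_const ?_
      rintro Y rfl
      filter_upwards with ω
      by_cases hω : ω ∈ A n
      · simp only [indicator_of_mem hω]
        exact EReal.coe_le_coe_iff.2 (neg_le_of_abs_le hω.2.1)
      · simp only [indicator_of_notMem hω, EReal.coe_zero]
        exact EReal.coe_le_coe_iff.2 (neg_nonpos_of_nonneg (Nat.cast_nonneg n))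
    -- superadditivity + projection equality
    have hsum : (A n).indicator W + (A n).indicator (Z - W) = (A n).indicator Z := by
      funext ω
      by_cases hω : ω ∈ A n <;>
        simp [indicator_of_mem, indicator_of_notMem, hω]
    have hs := hsuper ((A n).indicator W) ((A n).indicator (Z - W))
    rw [hsum] at hs
    have heq := hZW (A n) (hAmeas n)
    have hle : ∀ᵐ ω ∂μ, I0 ((A n).indicator (Z - W)) ω ≤ 0 := by
      filter_upwards [hs, heq, hbd, hsupn, hinfn] with ω h1 h2 ⟨hb1, hb2⟩ h3 h4
      have hIW := le_trans h1 h2.le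
      have htop : I0 ((A n).indicator W) ω ≠ ⊤ :=
        ne_top_of_le_ne_top (EReal.coe_ne_top _) (le_trans hb2 h3)
      have hbot : I0 ((A n).indicator W) ω ≠ ⊥ :=
        ne_bot_of_le_ne_bot (EReal.coe_ne_bot _) (le_trans h4 hb1)
      lift I0 ((A n).indicator W) ω to ℝ using ⟨htop, hbot⟩ with r hr
      have := (EReal.addLECancellable_coe r) (by simpa using hIW : (r : EReal) + _ ≤ (r : EReal) + 0)
      exact this
    -- positive definiteness
    have hYmeas : Measurable ((A n).indicator (Z - W)) :=
      (Measurable.indicator (hZ.sub hW) (hAmeas n)).mono le_rfl le_rfl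
    have hYnonneg : ∀ᵐ ω ∂μ, 0 ≤ (A n).indicator (Z - W) ω := by
      filter_upwards with ω
      by_cases hω : ω ∈ A n
      · simp only [indicator_of_mem hω, Pi.sub_apply]
        exact sub_nonneg.2 hω.1.le
      · simp [indicator_of_notMem hω]
    have hY0 := (hposdef _ hYmeas hYnonneg).1 hle
    filter_upwards [hY0] with ω h0 hω
    rw [indicator_of_mem hω] at h0
    exact absurd (sub_eq_zero.1 h0) hω.1.ne'
  have := (ae_all_iff).2 key
  filter_upwards [this] with ω h
  by_contra hlt
  push_neg at hlt
  obtain ⟨n, hn⟩ := exists_nat_ge (max |W ω| |Z ω|)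
  exact h n ⟨hlt, le_trans (le_max_left _ _) hn, le_trans (le_max_right _ _) hn⟩

/-- Uniqueness of the projection: if `I₀` is super-additive,
`I₀(Y) ≤ 0 ⟹ Y = 0` for nonnegative `Y`, and two `F_t`-measurable random variables `Z` and
`W` (the latter playing the role of `I_t(X)`) both satisfy the projection equality
`I₀(X·1_F) = I₀(Z·1_F)` for all `F ∈ F_t`, then `Z = W` a.e. -/
theorem projection_uniqueness
    {F : MeasurableSpace Ω} (μ : Measure Ω)
    (F0 Ft : MeasurableSpace Ω) (h0t : F0 ≤ Ft) (htF : Ft ≤ F)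
    (I0 : (Ω → ℝ) → Ω → EReal)
    (hmeasI0 : ∀ X : Ω → ℝ, Measurable[F0] (I0 X))
    (hbdd : ∀ X : Ω → ℝ, ∃ einf esup : Ω → EReal,
      IsCondInf μ F0 {fun ω => (X ω : EReal)} einf ∧
        IsCondSup μ F0 {fun ω => (X ω : EReal)} esup ∧
        ∀ᵐ ω ∂μ, einf ω ≤ I0 X ω ∧ I0 X ω ≤ esup ω)
    (hsuper : ∀ X Y : Ω → ℝ, ∀ᵐ ω ∂μ, I0 X ω + I0 Y ω ≤ I0 (X + Y) ω)
    (hposdef : ∀ Y : Ω → ℝ, Measurable Y → (∀ᵐ ω ∂μ, 0 ≤ Y ω) →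
      ((∀ᵐ ω ∂μ, I0 Y ω ≤ 0) ↔ Y =ᵐ[μ] 0))
    (X : Ω → ℝ) (hX : Measurable X)
    (Z : Ω → ℝ) (hZ : Measurable[Ft] Z)
    (W : Ω → ℝ) (hW : Measurable[Ft] W)
    (hprojZ : ∀ A : Set Ω, MeasurableSet[Ft] A →
      I0 (A.indicator X) =ᵐ[μ] I0 (A.indicator Z))
    (hprojW : ∀ A : Set Ω, MeasurableSet[Ft] A →
      I0 (A.indicator X) =ᵐ[μ] I0 (A.indicator W)) :
    Z =ᵐ[μ] W := by
  have h1 : ∀ A : Set Ω, MeasurableSet[Ft] A →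
      I0 (A.indicator Z) =ᵐ[μ] I0 (A.indicator W) :=
    fun A hA => ((hprojZ A hA).symm.trans (hprojW A hA))
  have h2 : ∀ A : Set Ω, MeasurableSet[Ft] A →
      I0 (A.indicator W) =ᵐ[μ] I0 (A.indicator Z) :=
    fun A hA => (h1 A hA).symm
  have hZleW := proj_aux μ F0 Ft htF I0 hbdd hsuper hposdef Z hZ W hW h1
  have hWleZ := proj_aux μ F0 Ft htF I0 hbdd hsuper hposdef W hW Z hZ h2
  filter_upwards [hZleW, hWleZ] with ω ha hb
  exact le_antisymm ha hb
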